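/- Let G be a graph, let 𝓗 be a set of connected subgraphs of G, and let ℓ ∈ ℕ₀. Then either there exist more than ℓ pairwise vertex-disjoint subgraphs in 𝓗, or there is a set Q ⊆ V(G) with |Q| ≤ (tw(G)+1)·ℓ·log₂(ℓ+1) such that G − Q contains no subgraph belonging to 𝓗. -/

import Mathlib

open SimpleGraph

universe u

/-- A tree-decomposition of a graph `G`. -/
structure TreeDecomp {V : Type u} (G : SimpleGraph V) : Type (u + 1) where
  ι : Type u
  T : SimpleGraph ι
  isTree : T.IsTree
  bag : ι → Set V
  mem_bag : ∀ v : V, ∃ i, v ∈ bag i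
  edge_bag : ∀ ⦃u v : V⦄, G.Adj u v → ∃ i, u ∈ bag i ∧ v ∈ bag i
  bag_conn : ∀ v : V, (T.induce {i | v ∈ bag i}).Connected

/-- `G` has treewidth at most `k`. -/
def TreewidthLE {V : Type u} (G : SimpleGraph V) (k : ℕ) : Prop :=
  ∃ d : TreeDecomp G, ∀ i, (d.bag i).ncard ≤ k + 1

/-- The treewidth of `G`. -/
noncomputable def treewidth {V : Type u} (G : SimpleGraph V) : ℕ :=
  sInf {k | TreewidthLE G k}

section Assembly

variable {V : Type} [Fintype V] {G : SimpleGraph V}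

lemma finite_subgraph (G : SimpleGraph V) : Finite G.Subgraph := by
  apply Finite.of_injective (fun H : G.Subgraph => (H.verts, H.Adj))
  intro H1 H2 h
  rw [Prod.mk.injEq] at h
  exact SimpleGraph.Subgraph.ext h.1 h.2

lemma trivialDecomp (G : SimpleGraph V) : TreewidthLE G (Fintype.card V) := by
  refine ⟨⟨PUnit, ⊥, ⟨?_, by simp⟩, fun _ => Set.univ, fun v => ⟨PUnit.unit, trivial⟩,
    fun u v _ => ⟨PUnit.unit, trivial, trivial⟩, fun v => ?_⟩, fun i => ?_⟩
  · exact ⟨fun u v => by cases u; cases v; exact Reachable.refl _⟩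
  · haveI : Nonempty ({i | v ∈ (fun _ : PUnit => (Set.univ : Set V)) i}) := ⟨⟨PUnit.unit, trivial⟩⟩
    exact ⟨fun u w => (Subsingleton.elim u w) ▸ Reachable.refl _⟩
  · simp only [Set.ncard_univ, Nat.card_eq_fintype_card]
    omega

lemma tw_le (G : SimpleGraph V) : TreewidthLE G (treewidth G) :=
  Nat.sInf_mem (⟨Fintype.card V, trivialDecomp G⟩ : {k | TreewidthLE G k}.Nonempty)

end Assembly

section Assembly2

variable {V : Type} [Fintype V] {G : SimpleGraph V}

lemma SfConn (d : TreeDecomp G) {H : G.Subgraph} (hH : H.Connected) :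
    (d.T.induce {i | (d.bag i ∩ H.verts).Nonempty}).Connected := by
  set S := {i | (d.bag i ∩ H.verts).Nonempty} with hSdef
  have hsub : ∀ (v : V), v ∈ H.verts → {l | v ∈ d.bag l} ⊆ S := fun v hv l hl => ⟨v, hl, hv⟩
  have samebag : ∀ (v : V) (hv : v ∈ H.verts) (i : d.ι) (hi : v ∈ d.bag i) (k : d.ι)
      (hk : v ∈ d.bag k),
      (d.T.induce S).Reachable ⟨i, hsub v hv hi⟩ ⟨k, hsub v hv hk⟩ := by
    intro v hv i hi k hk
    have h1 : (d.T.induce {l | v ∈ d.bag l}).Reachable ⟨i, hi⟩ ⟨k, hk⟩ :=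
      (d.bag_conn v).preconnected ⟨i, hi⟩ ⟨k, hk⟩
    exact h1.map (d.T.induceHomOfLE (hsub v hv)).toHom
  have key : ∀ (a b : H.verts) (p : H.coe.Walk a b) (i : d.ι) (hi : (a : V) ∈ d.bag i)
      (j : d.ι) (hj : (b : V) ∈ d.bag j),
      (d.T.induce S).Reachable ⟨i, hsub a a.2 hi⟩ ⟨j, hsub b b.2 hj⟩ := by
    intro a b p
    induction p with
    | nil => intro i hi j hj; exact samebag _ (Subtype.coe_prop _) i hi j hj
    | @cons a c b hadj q ih =>
      intro i hi j hj
      have hG : G.Adj (a : V) (c : V) := H.adj_sub hadj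
      obtain ⟨k, hk1, hk2⟩ := d.edge_bag hG
      exact (samebag (a : V) a.2 i hi k hk1).trans (ih k hk2 j hj)
  have hnonempty : Nonempty S := by
    obtain ⟨v, hv⟩ := hH.nonempty
    obtain ⟨i, hi⟩ := d.mem_bag v
    exact ⟨⟨i, ⟨v, hi, hv⟩⟩⟩
  refine ⟨fun a b => ?_⟩
  obtain ⟨i, hi⟩ := a
  obtain ⟨j, hj⟩ := b
  obtain ⟨v, hvb, hvH⟩ := hi
  obtain ⟨w, hwb, hwH⟩ := hj
  obtain ⟨p⟩ := hH.coe.preconnected ⟨v, hvH⟩ ⟨w, hwH⟩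
  exact key ⟨v, hvH⟩ ⟨w, hwH⟩ p i hvb j hwb

lemma ncard_biUnion_le' {β γ : Type*} [Fintype γ] (X : Finset β) (f : β → Set γ) :
    (⋃ i ∈ X, f i).ncard ≤ ∑ i ∈ X, (f i).ncard := by
  classical
  induction X using Finset.induction with
  | empty => simp
  | @insert a s hx ih =>
    rw [Finset.sum_insert hx]
    calc (⋃ i ∈ insert a s, f i).ncard = ((f a) ∪ ⋃ i ∈ s, f i).ncard := by
          rw [Finset.set_biUnion_insert]
      _ ≤ (f a).ncard + (⋃ i ∈ s, f i).ncard := Set.ncard_union_le _ _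
      _ ≤ (f a).ncard + ∑ i ∈ s, (f i).ncard := by omega

end Assembly2


section TreeLemmas

set_option linter.unusedSectionVars false

variable {ι : Type*} [DecidableEq ι] {T : SimpleGraph ι}

lemma path_unique' (hT : T.IsTree) {u v : ι} {p q : T.Walk u v}
    (hp : p.IsPath) (hq : q.IsPath) : p = q :=
  (hT.existsUnique_path u v).unique hp hq

lemma exists_path' (hT : T.IsTree) (u v : ι) : ∃ p : T.Walk u v, p.IsPath :=
  ⟨(hT.isConnected.preconnected u v).some.bypass, SimpleGraph.Walk.bypass_isPath _⟩

lemma path_length' (hT : T.IsTree) {u v : ι} {p : T.Walk u v} (hp : p.IsPath) :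
    p.length = T.dist u v := by
  refine le_antisymm ?_ (SimpleGraph.dist_le p)
  obtain ⟨w, hw⟩ := (hT.isConnected.preconnected u v).exists_walk_length_eq_dist
  calc p.length = w.bypass.length := by
        rw [path_unique' hT hp w.bypass_isPath]
    _ ≤ w.length := SimpleGraph.Walk.length_bypass_le w
    _ = T.dist u v := hw

lemma convex_support' (hT : T.IsTree) {S : Set ι} (hS : (T.induce S).Connected)
    {a b : ι} (ha : a ∈ S) (hb : b ∈ S) {p : T.Walk a b} (hp : p.IsPath) :
    ∀ u ∈ p.support, u ∈ S := by
  obtain ⟨w⟩ := hS.preconnected ⟨a, ha⟩ ⟨b, hb⟩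
  let w' : T.Walk a b := w.map (SimpleGraph.Embedding.induce S).toHom
  have h1 : p = w'.bypass := path_unique' hT hp (SimpleGraph.Walk.bypass_isPath _)
  intro u hu
  have hu' : u ∈ w'.support := SimpleGraph.Walk.support_bypass_subset _ (h1 ▸ hu)
  rw [show w'.support = _ from SimpleGraph.Walk.support_map _ _] at hu'
  obtain ⟨z, _, rfl⟩ := List.mem_map.mp hu'
  exact z.2

lemma gate_mem_path' (hT : T.IsTree) (r : ι) {S : Set ι} (hS : (T.induce S).Connected)
    {x : ι} (hx : x ∈ S) (hmin : ∀ y ∈ S, T.dist r x ≤ T.dist r y)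
    {y : ι} (hy : y ∈ S) {p : T.Walk r y} (hp : p.IsPath) : x ∈ p.support := by
  obtain ⟨p0, hp0⟩ := exists_path' hT r x
  obtain ⟨P, hP⟩ := exists_path' hT x y
  have hPS : ∀ u ∈ P.support, u ∈ S := convex_support' hT hS hx hy hP
  have hxtail : x ∉ P.support.tail := by
    have := hP.support_nodup
    rw [P.support_eq_cons] at this
    exact (List.nodup_cons.mp this).1
  have hdisj : P.support.tail.Nodup := by
    have := hP.support_nodup
    rw [P.support_eq_cons] at this
    exact (List.nodup_cons.mp this).2
  have hD : List.Disjoint p0.support P.support.tail := by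
    intro u hu hut
    have huS : u ∈ S := hPS u (List.tail_subset _ hut)
    have h1 : T.dist r x ≤ T.dist r u := hmin u huS
    have h2 : (p0.takeUntil u hu).length = T.dist r u :=
      path_length' hT (hp0.takeUntil hu)
    have h3 : (p0.takeUntil u hu).length ≤ p0.length := Walk.length_takeUntil_le p0 hu
    have h4 : p0.length = T.dist r x := path_length' hT hp0
    have h5 : (p0.dropUntil u hu).length = 0 := by
      have h6 := congrArg Walk.length (p0.take_spec hu)
      rw [Walk.length_append] at h6
      omega
    have : u = x := Walk.eq_of_length_eq_zero h5
    exact hxtail (this ▸ hut)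
  have hpath : (p0.append P).IsPath := by
    rw [Walk.isPath_def, Walk.support_append]
    exact List.Nodup.append hp0.support_nodup hdisj hD
  have hpq : p = p0.append P := path_unique' hT hp hpath
  rw [hpq, Walk.mem_support_append_iff]
  exact Or.inl p0.end_mem_support

lemma extremal' (hT : T.IsTree) {α : Type*} (S : α → Set ι) (A : Finset α) (hA : A.Nonempty)
    (hne : ∀ a ∈ A, (S a).Nonempty) (hconn : ∀ a ∈ A, (T.induce (S a)).Connected) :
    ∃ a ∈ A, ∃ x ∈ S a, ∀ b ∈ A, (S a ∩ S b).Nonempty → x ∈ S b := by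
  obtain ⟨r⟩ : Nonempty ι := hT.isConnected.nonempty
  set f : α → ℕ := fun a => sInf (T.dist r '' (S a)) with hf
  obtain ⟨a, haA, hamax⟩ := A.exists_max_image f hA
  obtain ⟨x, hxS, hxd⟩ : f a ∈ T.dist r '' (S a) := Nat.sInf_mem ((hne a haA).image _)
  refine ⟨a, haA, x, hxS, ?_⟩
  rintro b hbA ⟨y, hyA, hyB⟩
  have hminx : ∀ z ∈ S a, T.dist r x ≤ T.dist r z := fun z hz => by
    rw [hxd]; exact Nat.sInf_le ⟨z, hz, rfl⟩
  obtain ⟨xb, hxbS, hxbd⟩ : f b ∈ T.dist r '' (S b) := Nat.sInf_mem ((hne b hbA).image _)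
  have hminb : ∀ z ∈ S b, T.dist r xb ≤ T.dist r z := fun z hz => by
    rw [hxbd]; exact Nat.sInf_le ⟨z, hz, rfl⟩
  have hble : T.dist r xb ≤ T.dist r x := by rw [hxbd, hxd]; exact hamax b hbA
  obtain ⟨p, hp⟩ := exists_path' hT r y
  have hxp : x ∈ p.support := gate_mem_path' hT r (hconn a haA) hxS hminx hyA hp
  have hxbp : xb ∈ p.support := gate_mem_path' hT r (hconn b hbA) hxbS hminb hyB hp
  have hd : (p.dropUntil xb hxbp).IsPath := hp.dropUntil hxbp
  by_cases hcase : x ∈ (p.dropUntil xb hxbp).support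
  · exact convex_support' hT (hconn b hbA) hxbS hyB hd x hcase
  · have hxt : x ∈ (p.takeUntil xb hxbp).support := by
      have h6 := hxp
      rw [← p.take_spec hxbp, Walk.mem_support_append_iff] at h6
      tauto
    set t := p.takeUntil xb hxbp with ht
    have hpt : t.IsPath := hp.takeUntil hxbp
    have h1 : (t.takeUntil x hxt).length = T.dist r x := path_length' hT (hpt.takeUntil hxt)
    have h2 : (t.takeUntil x hxt).length ≤ t.length := Walk.length_takeUntil_le t hxt
    have h3 : t.length = T.dist r xb := path_length' hT hpt
    have h5 : (t.dropUntil x hxt).length = 0 := by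
      have h6 := congrArg Walk.length (t.take_spec hxt)
      rw [Walk.length_append] at h6
      omega
    have hxx : x = xb := Walk.eq_of_length_eq_zero h5
    rw [hxx]; exact hxbS

lemma treeEP' (hT : T.IsTree) {α : Type*} [DecidableEq α] (S : α → Set ι) :
    ∀ (ℓ : ℕ) (A : Finset α), (∀ a ∈ A, (S a).Nonempty) →
    (∀ a ∈ A, (T.induce (S a)).Connected) →
    (∃ B : Finset α, B ⊆ A ∧ ℓ < B.card ∧
        (B : Set α).Pairwise fun a b => Disjoint (S a) (S b)) ∨
    (∃ X : Finset ι, X.card ≤ ℓ ∧ ∀ a ∈ A, ∃ i ∈ X, i ∈ S a) := by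
  intro ℓ
  induction ℓ with
  | zero =>
    intro A hne hconn
    rcases A.eq_empty_or_nonempty with rfl | ⟨a, haA⟩
    · exact Or.inr ⟨∅, by simp⟩
    · refine Or.inl ⟨{a}, Finset.singleton_subset_iff.mpr haA, by simp, ?_⟩
      simp [Set.pairwise_singleton]
  | succ m ih =>
    intro A hne hconn
    classical
    rcases A.eq_empty_or_nonempty with rfl | hA
    · exact Or.inr ⟨∅, by simp⟩
    obtain ⟨a, haA, x, hxa, hkey⟩ := extremal' hT S A hA hne hconn
    set A' := A.filter (fun b => Disjoint (S a) (S b)) with hA'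
    have hsub : A' ⊆ A := Finset.filter_subset _ _
    rcases ih A' (fun b hb => hne b (hsub hb)) (fun b hb => hconn b (hsub hb)) with
      ⟨B, hBsub, hBcard, hBpw⟩ | ⟨X, hX, hXhit⟩
    · left
      have haB : a ∉ B := by
        intro haB
        have := (Finset.mem_filter.mp (hBsub haB)).2
        exact ((hne a haA).ne_empty) (disjoint_self.mp this)
      refine ⟨insert a B, Finset.insert_subset haA (hBsub.trans hsub), ?_, ?_⟩
      · rw [Finset.card_insert_of_notMem haB]; omega
      · rw [Finset.coe_insert]
        apply Set.Pairwise.insert hBpw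
        intro b hbB _
        have hdisj := (Finset.mem_filter.mp (hBsub hbB)).2
        exact ⟨hdisj, hdisj.symm⟩
    · right
      refine ⟨insert x X, ?_, ?_⟩
      · calc (insert x X).card ≤ X.card + 1 := Finset.card_insert_le _ _
          _ ≤ m + 1 := by omega
      · intro b hbA
        by_cases hb : Disjoint (S a) (S b)
        · obtain ⟨i, hiX, hiS⟩ := hXhit b (Finset.mem_filter.mpr ⟨hbA, hb⟩)
          exact ⟨i, Finset.mem_insert_of_mem hiX, hiS⟩
        · exact ⟨x, Finset.mem_insert_self _ _,
            hkey b hbA (Set.not_disjoint_iff_nonempty_inter.mp hb)⟩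

end TreeLemmas


/-- Erdős–Pósa-type result: for a set `𝓗` of connected subgraphs of `G` and `ℓ ∈ ℕ`,
either there are more than `ℓ` pairwise vertex-disjoint members of `𝓗`, or some set
`Q ⊆ V(G)` with `|Q| ≤ (tw(G)+1)·ℓ·log₂(ℓ+1)` meets every member of `𝓗`
(so that `G − Q` contains no member of `𝓗`). -/
theorem stmt_3 {V : Type} [Fintype V] (G : SimpleGraph V) (𝓗 : Set G.Subgraph)
    (hconn : ∀ H ∈ 𝓗, H.Connected) (ℓ : ℕ) :
    (∃ s : Finset G.Subgraph, ↑s ⊆ 𝓗 ∧ ℓ < s.card ∧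
      (s : Set G.Subgraph).Pairwise fun H₁ H₂ => Disjoint H₁.verts H₂.verts) ∨
    (∃ Q : Set V,
      (Q.ncard : ℝ) ≤ ((treewidth G : ℝ) + 1) * ℓ * Real.logb 2 (ℓ + 1) ∧
      ∀ H ∈ 𝓗, (H.verts ∩ Q).Nonempty) := by
  classical
  haveI := finite_subgraph G
  obtain ⟨d, hbags⟩ := tw_le G
  haveI : DecidableEq d.ι := Classical.decEq _
  set S : G.Subgraph → Set d.ι := fun H => {i | (d.bag i ∩ H.verts).Nonempty} with hS
  have hfin : 𝓗.Finite := Set.toFinite 𝓗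
  set A := hfin.toFinset with hA
  have hmem : ∀ H, H ∈ A ↔ H ∈ 𝓗 := fun H => hfin.mem_toFinset
  have hne : ∀ H ∈ A, (S H).Nonempty := by
    intro H hH
    obtain ⟨v, hv⟩ := (hconn H ((hmem H).mp hH)).nonempty
    obtain ⟨i, hi⟩ := d.mem_bag v
    exact ⟨i, v, hi, hv⟩
  have hcn : ∀ H ∈ A, (d.T.induce (S H)).Connected := fun H hH =>
    SfConn d (hconn H ((hmem H).mp hH))
  rcases treeEP' d.isTree S ℓ A hne hcn with ⟨B, hBA, hBcard, hBpw⟩ | ⟨X, hXcard, hXhit⟩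
  · left
    refine ⟨B, ?_, hBcard, ?_⟩
    · intro H hH
      exact (hmem H).mp (hBA hH)
    · refine hBpw.imp ?_
      intro H1 H2 hd12
      rw [Set.disjoint_left]
      intro v hv1 hv2
      obtain ⟨i, hi⟩ := d.mem_bag v
      exact (Set.disjoint_left.mp hd12 ⟨v, hi, hv1⟩) ⟨v, hi, hv2⟩
  · right
    refine ⟨⋃ i ∈ X, d.bag i, ?_, ?_⟩
    · have h1 : (⋃ i ∈ X, d.bag i).ncard ≤ ∑ i ∈ X, (d.bag i).ncard :=
        ncard_biUnion_le' X d.bag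
      have h2 : ∑ i ∈ X, (d.bag i).ncard ≤ X.card * (treewidth G + 1) := by
        calc ∑ i ∈ X, (d.bag i).ncard ≤ X.card • (treewidth G + 1) :=
              Finset.sum_le_card_nsmul X _ _ (fun i _ => hbags i)
          _ = X.card * (treewidth G + 1) := by rw [smul_eq_mul]
      rcases Nat.eq_zero_or_pos ℓ with rfl | hl
      · have hX0 : X.card = 0 := le_antisymm hXcard (Nat.zero_le _)
        rw [hX0, zero_mul] at h2
        have : (⋃ i ∈ X, d.bag i).ncard = 0 := by omega
        rw [this]
        simp
      · have h2' : ((2:ℝ)) ≤ (ℓ:ℝ) + 1 := by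
          have : (1:ℝ) ≤ (ℓ:ℝ) := by exact_mod_cast hl
          linarith
        have hlog : (1:ℝ) ≤ Real.logb 2 (ℓ + 1) := by
          calc (1:ℝ) = Real.logb 2 2 := (Real.logb_self_eq_one (by norm_num)).symm
            _ ≤ Real.logb 2 (ℓ+1) :=
              Real.logb_le_logb_of_le (by norm_num) (by norm_num) h2'
        have hc1 : ((⋃ i ∈ X, d.bag i).ncard : ℝ) ≤ (X.card : ℝ) * ((treewidth G : ℝ) + 1) := by
          exact_mod_cast le_trans h1 h2
        have hc2 : (X.card : ℝ) ≤ (ℓ : ℝ) := by exact_mod_cast hXcard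
        have htw : (0:ℝ) ≤ (treewidth G : ℝ) + 1 := by positivity
        have hl' : (0:ℝ) ≤ (ℓ:ℝ) := by positivity
        calc ((⋃ i ∈ X, d.bag i).ncard : ℝ) ≤ (X.card : ℝ) * ((treewidth G : ℝ) + 1) := hc1
          _ ≤ (ℓ : ℝ) * ((treewidth G : ℝ) + 1) := by nlinarith
          _ = ((treewidth G : ℝ) + 1) * ℓ * 1 := by ring
          _ ≤ ((treewidth G : ℝ) + 1) * ℓ * Real.logb 2 (ℓ + 1) := by
            nlinarith [mul_nonneg (mul_nonneg htw hl') (sub_nonneg.mpr hlog)]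
    · intro H hH
      obtain ⟨i, hiX, hiS⟩ := hXhit H ((hmem H).mpr hH)
      obtain ⟨v, hvb, hvH⟩ := hiS
      exact ⟨v, hvH, Set.mem_biUnion hiX hvb⟩
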